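/- Let X be any n×p real matrix and let R satisfy 1 ≤ R ≤ min(n,p) and R < n. For the left singular subspace function U_R of the standard SVD (with any fixed selection of singular vectors when they are not unique), there exists k ≤ R+1 such that (k,1) ∈ BP(U_R;X). In particular, bp_row(U_R;X) ≤ R+1 and bp_col(U_R;X) = 1. -/

import Mathlib

noncomputable section
open scoped BigOperators
open Matrix

abbrev E (k : ℕ) := EuclideanSpace ℝ (Fin k)

noncomputable def canonAngle {k : ℕ} (V W : Submodule ℝ (E k)) : ℝ :=
  Real.arccos (sInf {r : ℝ | ∃ w ∈ W, ‖w‖ = 1 ∧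
    r = ‖(Submodule.orthogonalProjection V w : E k)‖})

variable {n p m : ℕ}

def BlockCorrupt (X Z : Matrix (Fin n) (Fin p) ℝ) (k l : ℕ) : Prop :=
  ∃ (I : Finset (Fin n)) (J : Finset (Fin p)), I.card = k ∧ J.card = l ∧
    ∀ i j, (i ∉ I ∨ j ∉ J) → Z i j = X i j

def RowCorrupt (X Z : Matrix (Fin n) (Fin p) ℝ) (k : ℕ) : Prop :=
  ∃ I : Finset (Fin n), I.card = k ∧ ∀ i ∉ I, ∀ j, Z i j = X i j

def ColCorrupt (X Z : Matrix (Fin n) (Fin p) ℝ) (l : ℕ) : Prop :=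
  ∃ J : Finset (Fin p), J.card = l ∧ ∀ j ∉ J, ∀ i, Z i j = X i j

def BreaksDownBlock (V : Matrix (Fin n) (Fin p) ℝ → Submodule ℝ (E m))
    (X : Matrix (Fin n) (Fin p) ℝ) (k l : ℕ) : Prop :=
  sSup {d : ℝ | ∃ Z, BlockCorrupt X Z k l ∧ d = canonAngle (V Z) (V X)} = Real.pi / 2

def BreaksDownRow (V : Matrix (Fin n) (Fin p) ℝ → Submodule ℝ (E m))
    (X : Matrix (Fin n) (Fin p) ℝ) (k : ℕ) : Prop :=
  sSup {d : ℝ | ∃ Z, RowCorrupt X Z k ∧ d = canonAngle (V Z) (V X)} = Real.pi / 2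

def BreaksDownCol (V : Matrix (Fin n) (Fin p) ℝ → Submodule ℝ (E m))
    (X : Matrix (Fin n) (Fin p) ℝ) (l : ℕ) : Prop :=
  sSup {d : ℝ | ∃ Z, ColCorrupt X Z l ∧ d = canonAngle (V Z) (V X)} = Real.pi / 2

noncomputable def bpRow (V : Matrix (Fin n) (Fin p) ℝ → Submodule ℝ (E m))
    (X : Matrix (Fin n) (Fin p) ℝ) : ℕ :=
  sInf {k : ℕ | 1 ≤ k ∧ k ≤ n ∧ BreaksDownRow V X k}

noncomputable def bpCol (V : Matrix (Fin n) (Fin p) ℝ → Submodule ℝ (E m))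
    (X : Matrix (Fin n) (Fin p) ℝ) : ℕ :=
  sInf {l : ℕ | 1 ≤ l ∧ l ≤ p ∧ BreaksDownCol V X l}

def IsBP (V : Matrix (Fin n) (Fin p) ℝ → Submodule ℝ (E m))
    (X : Matrix (Fin n) (Fin p) ℝ) (i j : ℕ) : Prop :=
  1 ≤ i ∧ i ≤ n ∧ 1 ≤ j ∧ j ≤ p ∧
  (∀ k l, i ≤ k → k ≤ n → j ≤ l → l ≤ p → BreaksDownBlock V X k l) ∧
  (∀ k l, 1 ≤ k → 1 ≤ l → k ≤ i → l ≤ j → (k, l) ≠ (i, j) → ¬ BreaksDownBlock V X k l)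

/-- A full orthonormal system of left singular vectors of `Y` (eigenvectors of `Y Yᵀ`)
with singular values `σ` arranged in decreasing order. -/
def IsLeftSingularSystem {n p : ℕ} (Y : Matrix (Fin n) (Fin p) ℝ)
    (u : Fin n → E n) (σ : Fin n → ℝ) : Prop :=
  Orthonormal ℝ u ∧ (∀ i, 0 ≤ σ i) ∧ (∀ i j : Fin n, i ≤ j → σ j ≤ σ i) ∧
  ∀ i, Matrix.toEuclideanLin (Y * Yᵀ) (u i) = ((σ i) ^ 2) • u i

/-- A full orthonormal system of right singular vectors of `Y` (eigenvectors of `Yᵀ Y`)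
with singular values `σ` arranged in decreasing order. -/
def IsRightSingularSystem {n p : ℕ} (Y : Matrix (Fin n) (Fin p) ℝ)
    (v : Fin p → E p) (σ : Fin p → ℝ) : Prop :=
  Orthonormal ℝ v ∧ (∀ j, 0 ≤ σ j) ∧ (∀ i j : Fin p, i ≤ j → σ j ≤ σ i) ∧
  ∀ j, Matrix.toEuclideanLin (Yᵀ * Y) (v j) = ((σ j) ^ 2) • v j

/-- `S` is an `R`-dimensional subspace of `ℝⁿ` spanned by left singular vectors of `Y`
corresponding to its `R` largest singular values. -/
def IsLeftSingularSubspace {n p : ℕ} (Y : Matrix (Fin n) (Fin p) ℝ) (R : ℕ)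
    (S : Submodule ℝ (E n)) : Prop :=
  ∃ (u : Fin n → E n) (σ : Fin n → ℝ), IsLeftSingularSystem Y u σ ∧
    S = Submodule.span ℝ {x | ∃ i : Fin n, (i : ℕ) < R ∧ x = u i}

/-- `S` is an `R`-dimensional subspace of `ℝᵖ` spanned by right singular vectors of `Y`
corresponding to its `R` largest singular values. -/
def IsRightSingularSubspace {n p : ℕ} (Y : Matrix (Fin n) (Fin p) ℝ) (R : ℕ)
    (S : Submodule ℝ (E p)) : Prop :=
  ∃ (v : Fin p → E p) (σ : Fin p → ℝ), IsRightSingularSystem Y v σ ∧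
    S = Submodule.span ℝ {x | ∃ j : Fin p, (j : ℕ) < R ∧ x = v j}

open scoped RealInnerProductSpace
open Module Real

set_option maxHeartbeats 1600000

lemma oproj_eq_self_iff {k : ℕ} {K : Submodule ℝ (E k)} {v : E k} :
    (Submodule.orthogonalProjection K v : E k) = v ↔ v ∈ K :=
  Submodule.starProjection_eq_self_iff

lemma inner_oproj_left_eq_right {k : ℕ} (K : Submodule ℝ (E k)) (u v : E k) :
    ⟪(Submodule.orthogonalProjection K u : E k), v⟫
      = ⟪u, (Submodule.orthogonalProjection K v : E k)⟫ :=
  K.inner_starProjection_left_eq_right u v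

lemma oproj_norm_le {k : ℕ} (K : Submodule ℝ (E k)) :
    ‖Submodule.orthogonalProjection K‖ ≤ 1 :=
  K.orthogonalProjectionOnto_norm_le

lemma canonAngle_le_pi_div_two {k : ℕ} (V W : Submodule ℝ (E k)) :
    canonAngle V W ≤ Real.pi / 2 := by
  apply Real.arccos_le_pi_div_two.2
  apply Real.sInf_nonneg
  rintro x ⟨w, hw, h1, rfl⟩
  positivity

lemma canonAngle_self {k : ℕ} {S : Submodule ℝ (E k)} (h : ∃ z ∈ S, ‖z‖ = 1) :
    canonAngle S S = 0 := by
  obtain ⟨z, hz, hz1⟩ := h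
  have hset : {r : ℝ | ∃ w ∈ S, ‖w‖ = 1 ∧ r = ‖(Submodule.orthogonalProjection S w : E k)‖} = {1} := by
    ext r
    constructor
    · rintro ⟨w, hw, h1, rfl⟩
      rw [oproj_eq_self_iff.2 hw]
      simp [h1]
    · rintro rfl
      exact ⟨z, hz, hz1, by rw [oproj_eq_self_iff.2 hz, hz1]⟩
  rw [canonAngle, hset, csInf_singleton, Real.arccos_one]

lemma lss_span_eq {n R : ℕ} (hRn : R ≤ n) (u : Fin n → E n) :
    {x : E n | ∃ i : Fin n, (i : ℕ) < R ∧ x = u i}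
      = Set.range (fun j : Fin R => u (Fin.castLE hRn j)) := by
  ext x
  constructor
  · rintro ⟨i, hi, rfl⟩
    exact ⟨⟨(i : ℕ), hi⟩, by congr 1⟩
  · rintro ⟨j, rfl⟩
    exact ⟨Fin.castLE hRn j, j.2, rfl⟩

lemma lss_finrank {n p R : ℕ} (hRn : R ≤ n) {Y : Matrix (Fin n) (Fin p) ℝ}
    {S : Submodule ℝ (E n)} (h : IsLeftSingularSubspace Y R S) :
    finrank ℝ ↥S = R := by
  obtain ⟨u, σ, hsys, hspan⟩ := h
  rw [hspan, lss_span_eq hRn u]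
  have hli : LinearIndependent ℝ (fun j : Fin R => u (Fin.castLE hRn j)) :=
    hsys.1.linearIndependent.comp _ (Fin.castLE_injective hRn)
  rw [finrank_span_eq_card hli, Fintype.card_fin]

lemma lss_exists_unit {n p R : ℕ} (hR1 : 1 ≤ R) (hRn : R ≤ n)
    {Y : Matrix (Fin n) (Fin p) ℝ} {S : Submodule ℝ (E n)}
    (h : IsLeftSingularSubspace Y R S) : ∃ z ∈ S, ‖z‖ = 1 := by
  obtain ⟨u, σ, hsys, hspan⟩ := h
  have h0 : (0 : ℕ) < n := lt_of_lt_of_le hR1 hRn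
  refine ⟨u ⟨0, h0⟩, ?_, hsys.1.1 _⟩
  rw [hspan]
  exact Submodule.subset_span ⟨⟨0, h0⟩, hR1, rfl⟩

lemma sInf_proj_le {k : ℕ} {V W : Submodule ℝ (E k)} (hfr : finrank ℝ ↥V ≤ finrank ℝ ↥W)
    {z : E k} (hzV : z ∈ V) (hz1 : ‖z‖ = 1) {ε : ℝ} (hε : 0 ≤ ε)
    (hproj : ‖(Submodule.orthogonalProjection W z : E k)‖ ≤ ε) :
    sInf {r : ℝ | ∃ w ∈ W, ‖w‖ = 1 ∧ r = ‖(Submodule.orthogonalProjection V w : E k)‖} ≤ ε := by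
  set S := {r : ℝ | ∃ w ∈ W, ‖w‖ = 1 ∧ r = ‖(Submodule.orthogonalProjection V w : E k)‖} with hSdef
  by_contra hcon
  push_neg at hcon
  set δ := sInf S with hδdef
  have hδpos : 0 < δ := lt_of_le_of_lt hε hcon
  have hbdd : BddBelow S := ⟨0, by rintro r ⟨w, hw, h1, rfl⟩; positivity⟩
  have hlow : ∀ w : E k, w ∈ W → δ * ‖w‖ ≤ ‖(Submodule.orthogonalProjection V w : E k)‖ := by
    intro w hw
    rcases eq_or_ne w 0 with rfl | hw0
    · simp
    · have hnw : (0:ℝ) < ‖w‖ := norm_pos_iff.2 hw0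
      have hmem : ‖(Submodule.orthogonalProjection V ((‖w‖⁻¹) • w) : E k)‖ ∈ S :=
        ⟨(‖w‖⁻¹) • w, W.smul_mem _ hw,
          by rw [norm_smul, norm_inv, norm_norm, inv_mul_cancel₀ hnw.ne'], rfl⟩
      have hle := csInf_le hbdd hmem
      rw [_root_.map_smul] at hle
      have : ‖((‖w‖⁻¹ • Submodule.orthogonalProjection V w : ↥V) : E k)‖
          = ‖w‖⁻¹ * ‖(Submodule.orthogonalProjection V w : E k)‖ := by
        rw [Submodule.coe_smul, norm_smul, norm_inv, norm_norm]
      rw [this] at hle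
      rw [mul_comm]
      calc ‖w‖ * δ ≤ ‖w‖ * (‖w‖⁻¹ * ‖(Submodule.orthogonalProjection V w : E k)‖) :=
            mul_le_mul_of_nonneg_left hle hnw.le
        _ = ‖(Submodule.orthogonalProjection V w : E k)‖ := by
            rw [← mul_assoc, mul_inv_cancel₀ hnw.ne', one_mul]
  set Q : ↥W →ₗ[ℝ] ↥V :=
    ((Submodule.orthogonalProjection V).toLinearMap).comp W.subtype with hQdef
  have hQapp : ∀ w : ↥W, ((Q w : ↥V) : E k) = (Submodule.orthogonalProjection V (w : E k) : E k) := by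
    intro w
    simp [hQdef]
  have hQnorm : ∀ w : ↥W, δ * ‖(w : E k)‖ ≤ ‖Q w‖ := by
    intro w
    rw [Submodule.coe_norm, hQapp]
    exact hlow (w : E k) w.2
  have hinj : Function.Injective Q := by
    intro w w' hww'
    have h1 : Q (w - w') = 0 := by rw [map_sub, hww', sub_self]
    have h2 := hQnorm (w - w')
    rw [h1, norm_zero] at h2
    have h3 : ‖((w - w' : ↥W) : E k)‖ ≤ 0 := by
      by_contra hh
      push_neg at hh
      nlinarith
    have h4 := le_antisymm h3 (norm_nonneg _)
    rw [norm_eq_zero] at h4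
    rw [Submodule.coe_sub] at h4
    exact Subtype.ext (sub_eq_zero.1 h4)
  have hfr2 : finrank ℝ ↥W ≤ finrank ℝ ↥V := LinearMap.finrank_le_finrank_of_injective hinj
  have heq : finrank ℝ ↥W = finrank ℝ ↥V := le_antisymm hfr2 hfr
  have hsurj := (LinearMap.injective_iff_surjective_of_finrank_eq_finrank heq).1 hinj
  obtain ⟨w₀, hw₀⟩ := hsurj ⟨z, hzV⟩
  have hQw₀ : ((Submodule.orthogonalProjection V ((w₀ : E k)) : ↥V) : E k) = z := by
    rw [← hQapp, hw₀]
  have hkey1 : (1:ℝ) ≤ ‖(w₀ : E k)‖ * ε := by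
    have e1 : ⟪((Submodule.orthogonalProjection V ((w₀ : E k)) : ↥V) : E k), z⟫ = 1 := by
      rw [hQw₀, real_inner_self_eq_norm_sq, hz1]; norm_num
    have e3 : ⟪((Submodule.orthogonalProjection V ((w₀ : E k))) : E k), z⟫
        = ⟪(w₀ : E k), (Submodule.orthogonalProjection V z : E k)⟫ :=
      inner_oproj_left_eq_right V _ _
    have e4 : (Submodule.orthogonalProjection V z : E k) = z := oproj_eq_self_iff.2 hzV
    have e5 : ⟪(w₀ : E k), z⟫ = ⟪((Submodule.orthogonalProjection W ((w₀ : E k))) : E k), z⟫ := by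
      rw [oproj_eq_self_iff.2 w₀.2]
    have e6 : ⟪((Submodule.orthogonalProjection W ((w₀ : E k))) : E k), z⟫
        = ⟪(w₀ : E k), (Submodule.orthogonalProjection W z : E k)⟫ :=
      inner_oproj_left_eq_right W _ _
    have e7 : ⟪(w₀ : E k), (Submodule.orthogonalProjection W z : E k)⟫
        ≤ ‖(w₀ : E k)‖ * ‖(Submodule.orthogonalProjection W z : E k)‖ := real_inner_le_norm _ _
    have e8 : ‖(w₀ : E k)‖ * ‖(Submodule.orthogonalProjection W z : E k)‖ ≤ ‖(w₀ : E k)‖ * ε :=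
      mul_le_mul_of_nonneg_left hproj (norm_nonneg _)
    calc (1:ℝ) = ⟪((Submodule.orthogonalProjection V ((w₀ : E k)) : ↥V) : E k), z⟫ := e1.symm
      _ = ⟪(w₀ : E k), (Submodule.orthogonalProjection W z : E k)⟫ := by
          rw [e3, e4, e5, e6]
      _ ≤ ‖(w₀ : E k)‖ * ε := le_trans e7 e8
  have hkey2 : δ * ‖(w₀ : E k)‖ ≤ 1 := by
    have hn1 : ‖Q w₀‖ = 1 := by
      rw [Submodule.coe_norm, hQapp, hQw₀, hz1]
    linarith [hQnorm w₀]
  have h5 : δ ≤ δ * (‖(w₀ : E k)‖ * ε) := le_mul_of_one_le_right hδpos.le hkey1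
  have h7 : (δ * ‖(w₀ : E k)‖) * ε ≤ 1 * ε := mul_le_mul_of_nonneg_right hkey2 hε
  have : δ ≤ ε := by
    calc δ ≤ δ * (‖(w₀ : E k)‖ * ε) := h5
      _ = (δ * ‖(w₀ : E k)‖) * ε := by ring
      _ ≤ 1 * ε := h7
      _ = ε := one_mul ε
  linarith

lemma inner_mulsq {n p : ℕ} (Z : Matrix (Fin n) (Fin p) ℝ) (x : E n) :
    ⟪x, Matrix.toEuclideanLin (Z * Zᵀ) x⟫ = ‖Matrix.toEuclideanLin Zᵀ x‖ ^ 2 := by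
  have hadj : Matrix.toEuclideanLin Zᵀ = LinearMap.adjoint (Matrix.toEuclideanLin Z) := by
    rw [← Matrix.toEuclideanLin_conjTranspose_eq_adjoint,
      Matrix.conjTranspose_eq_transpose_of_trivial]
  have hmul : Matrix.toEuclideanLin (Z * Zᵀ) x
      = Matrix.toEuclideanLin Z (Matrix.toEuclideanLin Zᵀ x) := by
    simp [Matrix.toEuclideanLin_apply, Matrix.mulVec_mulVec]
  rw [hmul, hadj, ← LinearMap.adjoint_inner_left, real_inner_self_eq_norm_sq]

lemma rayleigh_le {n p : ℕ} (hn : 0 < n) {Z : Matrix (Fin n) (Fin p) ℝ} {u : Fin n → E n}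
    {σ : Fin n → ℝ} (hsys : IsLeftSingularSystem Z u σ) (x : E n) :
    ⟪x, Matrix.toEuclideanLin (Z * Zᵀ) x⟫ ≤ σ ⟨0, hn⟩ ^ 2 * ‖x‖ ^ 2 := by
  obtain ⟨hon, hσ0, hσd, heig⟩ := hsys
  haveI : Nonempty (Fin n) := ⟨⟨0, hn⟩⟩
  have card_eq : Fintype.card (Fin n) = finrank ℝ (E n) := by
    rw [Fintype.card_fin, finrank_euclideanSpace_fin]
  let b0 := basisOfOrthonormalOfCardEqFinrank hon card_eq
  have hb0 : ⇑b0 = u := coe_basisOfOrthonormalOfCardEqFinrank hon card_eq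
  have hb0on : Orthonormal ℝ ⇑b0 := by rw [hb0]; exact hon
  let b := b0.toOrthonormalBasis hb0on
  have hb : ⇑b = u := by rw [Basis.coe_toOrthonormalBasis, hb0]
  set M := Matrix.toEuclideanLin (Z * Zᵀ) with hMdef
  have hherm : (Z * Zᵀ).IsHermitian := by
    have h := Matrix.isHermitian_mul_conjTranspose_self Z
    rwa [Matrix.conjTranspose_eq_transpose_of_trivial] at h
  have hsym : M.IsSymmetric := Matrix.isHermitian_iff_isSymmetric.1 hherm
  have expand : ∑ i, ⟪x, b i⟫ * ⟪b i, M x⟫ = ⟪x, M x⟫ :=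
    b.sum_inner_mul_inner x (M x)
  have expand2 : ∑ i, ⟪x, b i⟫ * ⟪b i, x⟫ = ⟪x, x⟫ :=
    b.sum_inner_mul_inner x x
  have hterm : ∀ i, ⟪b i, M x⟫ = σ i ^ 2 * ⟪b i, x⟫ := by
    intro i
    rw [← hsym (b i) x]
    have : M (b i) = (σ i ^ 2) • b i := by rw [hMdef, hb]; exact heig i
    rw [this, real_inner_smul_left]
  have hbound : ∀ i, ⟪x, b i⟫ * ⟪b i, M x⟫
      ≤ σ ⟨0, hn⟩ ^ 2 * (⟪x, b i⟫ * ⟪b i, x⟫) := by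
    intro i
    rw [hterm i, real_inner_comm (b i) x]
    have hσle : σ i ^ 2 ≤ σ ⟨0, hn⟩ ^ 2 := by
      have h0i : (⟨0, hn⟩ : Fin n) ≤ i := Fin.mk_le_of_le_val (Nat.zero_le _)
      exact pow_le_pow_left₀ (hσ0 i) (hσd _ i h0i) 2
    nlinarith [sq_nonneg (⟪x, b i⟫)]
  calc ⟪x, M x⟫ = ∑ i, ⟪x, b i⟫ * ⟪b i, M x⟫ := expand.symm
    _ ≤ ∑ i, σ ⟨0, hn⟩ ^ 2 * (⟪x, b i⟫ * ⟪b i, x⟫) := Finset.sum_le_sum fun i _ => hbound i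
    _ = σ ⟨0, hn⟩ ^ 2 * ∑ i, ⟪x, b i⟫ * ⟪b i, x⟫ := by rw [Finset.mul_sum]
    _ = σ ⟨0, hn⟩ ^ 2 * ⟪x, x⟫ := by rw [expand2]
    _ = σ ⟨0, hn⟩ ^ 2 * ‖x‖ ^ 2 := by rw [real_inner_self_eq_norm_sq]

lemma exists_corrupt {n p R : ℕ} (hR1 : 1 ≤ R) (hRp : R ≤ p) (hRn : R < n)
    (U : Matrix (Fin n) (Fin p) ℝ → Submodule ℝ (E n))
    (hU : ∀ Y, IsLeftSingularSubspace Y R (U Y))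
    (X : Matrix (Fin n) (Fin p) ℝ) {ε : ℝ} (hε : 0 < ε) :
    ∃ Z, BlockCorrupt X Z (R+1) 1 ∧
      sInf {r : ℝ | ∃ w ∈ U X, ‖w‖ = 1 ∧
        r = ‖(Submodule.orthogonalProjection (U Z) w : E n)‖} ≤ ε := by
  have hn : 0 < n := lt_of_le_of_lt (Nat.zero_le R) hRn
  have hp : 0 < p := lt_of_lt_of_le hR1 hRp
  have hR1n : R + 1 ≤ n := hRn
  set ι : Fin (R+1) → Fin n := Fin.castLE hR1n with hιdef
  have hιinj : Function.Injective ι := Fin.castLE_injective hR1n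
  set j₀ : Fin p := ⟨0, hp⟩ with hj₀def
  set v : Fin (R+1) → E n := fun k => EuclideanSpace.single (ι k) (1:ℝ) with hvdef
  set Φ : (Fin (R+1) → ℝ) →ₗ[ℝ] E n := Fintype.linearCombination ℝ v with hΦdef
  have hΦapp : ∀ y : Fin (R+1) → ℝ, ∀ i : Fin n, Φ y i = ∑ k, y k * v k i := by
    intro y i
    rw [hΦdef, Fintype.linearCombination_apply]
    rw [WithLp.ofLp_sum, Finset.sum_apply i Finset.univ (fun k => (y k • v k).ofLp)]
    exact Finset.sum_congr rfl fun k _ => rfl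
  have hfrUX : finrank ℝ ↥(U X) = R := lss_finrank hRn.le (hU X)
  set ψ : (Fin (R+1) → ℝ) →ₗ[ℝ] ↥(U X) :=
    ((Submodule.orthogonalProjection (U X)).toLinearMap).comp Φ with hψdef
  have hψni : ¬ Function.Injective ψ := by
    intro h
    have hle := LinearMap.finrank_le_finrank_of_injective h
    rw [hfrUX, Module.finrank_fin_fun] at hle
    omega
  obtain ⟨y1, y2, hy12, hyne⟩ := Function.not_injective_iff.1 hψni
  set y := y1 - y2 with hydef
  have hy0 : y ≠ 0 := sub_ne_zero.2 hyne
  have hψy : ψ y = 0 := by rw [hydef, map_sub, hy12, sub_self]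
  set x := Φ y with hxdef
  have hPx : Submodule.orthogonalProjection (U X) x = 0 := hψy
  have hxsupp : ∀ i : Fin n, (∀ k, ι k ≠ i) → x i = 0 := by
    intro i hi
    rw [hxdef, hΦapp]
    apply Finset.sum_eq_zero
    intro k _
    have hv0 : v k i = 0 := by
      rw [hvdef]
      show (EuclideanSpace.single (ι k) (1:ℝ)) i = 0
      rw [EuclideanSpace.single_apply]
      simp [(hi k).symm]
    rw [hv0, mul_zero]
  have hxι : ∀ k, x (ι k) = y k := by
    intro k
    rw [hxdef, hΦapp]
    rw [Finset.sum_eq_single k]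
    · have : v k (ι k) = 1 := by
        rw [hvdef]
        show (EuclideanSpace.single (ι k) (1:ℝ)) (ι k) = 1
        rw [EuclideanSpace.single_apply]
        simp
      rw [this, mul_one]
    · intro k' _ hk'
      have : v k' (ι k) = 0 := by
        rw [hvdef]
        show (EuclideanSpace.single (ι k') (1:ℝ)) (ι k) = 0
        rw [EuclideanSpace.single_apply]
        simp only [ite_eq_right_iff]
        intro hc
        exact absurd (hιinj hc) (Ne.symm hk')
      rw [this, mul_zero]
    · intro h
      exact absurd (Finset.mem_univ k) h
  have hx0 : x ≠ 0 := by
    obtain ⟨k, hk⟩ := Function.ne_iff.1 hy0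
    intro hx
    apply hk
    have := hxι k
    rw [hx] at this
    exact this.symm
  have hxn : (0:ℝ) < ‖x‖ := norm_pos_iff.2 hx0
  set a : E n := ‖x‖⁻¹ • x with hadef
  have ha1 : ‖a‖ = 1 := by
    rw [hadef, norm_smul, norm_inv, norm_norm, inv_mul_cancel₀ hxn.ne']
  have hPa : Submodule.orthogonalProjection (U X) a = 0 := by
    rw [hadef, _root_.map_smul, hPx, smul_zero]
  have hasupp : ∀ i : Fin n, (∀ k, ι k ≠ i) → a i = 0 := by
    intro i hi
    rw [hadef]
    show ‖x‖⁻¹ * x i = 0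
    rw [hxsupp i hi, mul_zero]
  set I : Finset (Fin n) := Finset.image ι Finset.univ with hIdef
  have hIcard : I.card = R + 1 := by
    rw [hIdef, Finset.card_image_of_injective _ hιinj, Finset.card_univ, Fintype.card_fin]
  have hnotI : ∀ i, i ∉ I → a i = 0 := by
    intro i hi
    apply hasupp
    intro k hk
    apply hi
    rw [hIdef]
    exact Finset.mem_image.2 ⟨k, Finset.mem_univ k, hk⟩
  set Xt : Matrix (Fin n) (Fin p) ℝ :=
    fun i j => if i ∈ I ∧ j = j₀ then 0 else X i j with hXtdef
  set T := LinearMap.toContinuousLinearMap (Matrix.toEuclideanLin Xtᵀ) with hTdef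
  set C := ‖T‖ with hCdef
  have hC0 : 0 ≤ C := norm_nonneg T
  have hTb : ∀ xx : E n, ‖Matrix.toEuclideanLin Xtᵀ xx‖ ≤ C * ‖xx‖ := by
    intro xx
    have h := T.le_opNorm xx
    rwa [hTdef, LinearMap.coe_toContinuousLinearMap'] at h
  set t : ℝ := max 1 ((4*C + C^2 + 1)/ε^2) with htdef
  have ht1 : (1:ℝ) ≤ t := le_max_left _ _
  have ht0 : (0:ℝ) < t := lt_of_lt_of_le one_pos ht1
  have htb : (4*C + C^2 + 1)/ε^2 ≤ t := le_max_right _ _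
  have hεt : 4*C + C^2 + 1 ≤ ε^2 * t := by
    rw [div_le_iff₀ (by positivity)] at htb
    linarith
  have hkey : 4*C*t + C^2 ≤ ε^2 * t^2 := by nlinarith
  set Z : Matrix (Fin n) (Fin p) ℝ :=
    fun i j => if i ∈ I ∧ j = j₀ then t * a i else X i j with hZdef
  have hcorr : BlockCorrupt X Z (R+1) 1 := by
    refine ⟨I, {j₀}, hIcard, Finset.card_singleton _, ?_⟩
    intro i j hij
    rw [hZdef]
    have hc : ¬ (i ∈ I ∧ j = j₀) := by
      rcases hij with h | h
      · exact fun hc => h hc.1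
      · exact fun hc => h (Finset.mem_singleton.2 hc.2)
    simp only [hc, if_false]
  set A : Matrix (Fin n) (Fin p) ℝ := fun i j => if j = j₀ then a i else 0 with hAdef
  have hZeq : Z = Xt + t • A := by
    funext i j
    show (if i ∈ I ∧ j = j₀ then t * a i else X i j) = (Xt + t • A) i j
    rw [Matrix.add_apply, Matrix.smul_apply, smul_eq_mul]
    have hXtij : Xt i j = (if i ∈ I ∧ j = j₀ then 0 else X i j) := rfl
    have hAij : A i j = (if j = j₀ then a i else 0) := rfl
    rw [hXtij, hAij]
    by_cases hi : i ∈ I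
    · by_cases hj : j = j₀
      · rw [if_pos ⟨hi, hj⟩, if_pos ⟨hi, hj⟩, if_pos hj, zero_add]
      · rw [if_neg (fun hc => hj hc.2), if_neg (fun hc : i ∈ I ∧ j = j₀ => hj hc.2),
          if_neg hj, mul_zero, add_zero]
    · rw [if_neg (fun hc : i ∈ I ∧ j = j₀ => hi hc.1),
        if_neg (fun hc : i ∈ I ∧ j = j₀ => hi hc.1)]
      by_cases hj : j = j₀
      · rw [if_pos hj, hnotI i hi, mul_zero, add_zero]
      · rw [if_neg hj, mul_zero, add_zero]
  set s : E p := EuclideanSpace.single j₀ (1:ℝ) with hsdef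
  have hs1 : ‖s‖ = 1 := by rw [hsdef, EuclideanSpace.norm_single, norm_one]
  have hAt : ∀ xx : E n, Matrix.toEuclideanLin Aᵀ xx = (⟪a, xx⟫) • s := by
    intro xx
    ext j
    have hL : Matrix.toEuclideanLin Aᵀ xx j = ∑ i, A i j * xx i := rfl
    have hR : ((⟪a, xx⟫) • s) j = ⟪a, xx⟫ * (if j = j₀ then 1 else 0) := by
      rw [hsdef]
      show ⟪a, xx⟫ * (EuclideanSpace.single j₀ (1:ℝ)) j = _
      rw [EuclideanSpace.single_apply]
    rw [hL, hR]
    have hinner : ⟪a, xx⟫ = ∑ i, a i * xx i := by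
      simp [PiLp.inner_apply, RCLike.inner_apply, conj_trivial, mul_comm]
    by_cases hj : j = j₀
    · rw [if_pos hj, mul_one, hinner]
      apply Finset.sum_congr rfl
      intro i _
      have hAij : A i j = (if j = j₀ then a i else 0) := rfl
      rw [hAij, if_pos hj]
    · rw [if_neg hj, mul_zero]
      apply Finset.sum_eq_zero
      intro i _
      have hAij : A i j = (if j = j₀ then a i else 0) := rfl
      rw [hAij, if_neg hj, zero_mul]
  have hZt : ∀ xx : E n, Matrix.toEuclideanLin Zᵀ xx
      = Matrix.toEuclideanLin Xtᵀ xx + (t * ⟪a, xx⟫) • s := by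
    intro xx
    rw [hZeq, Matrix.transpose_add, Matrix.transpose_smul, map_add, _root_.map_smul,
      LinearMap.add_apply, LinearMap.smul_apply, hAt, smul_smul]
  have hupper : ∀ xx : E n, ‖xx‖ = 1 →
      ‖Matrix.toEuclideanLin Zᵀ xx‖^2 ≤ C^2 + 2*C*t + t^2 * ⟪a, xx⟫^2 := by
    intro xx hxx
    rw [hZt, norm_add_sq_real]
    set uu := Matrix.toEuclideanLin Xtᵀ xx with huu
    have h1 : ‖uu‖ ≤ C := by
      have := hTb xx
      rwa [hxx, mul_one] at this
    have h2 : ⟪uu, (t * ⟪a, xx⟫) • s⟫ = (t * ⟪a, xx⟫) * ⟪uu, s⟫ :=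
      real_inner_smul_right _ _ _
    have h3 : |⟪uu, s⟫| ≤ C := by
      have h := abs_real_inner_le_norm uu s
      rw [hs1, mul_one] at h
      exact le_trans h h1
    have h4 : |⟪a, xx⟫| ≤ 1 := by
      have h := abs_real_inner_le_norm a xx
      rwa [ha1, hxx, one_mul] at h
    have h5 : ‖(t * ⟪a, xx⟫) • s‖^2 = t^2 * ⟪a, xx⟫^2 := by
      rw [norm_smul, hs1, mul_one, Real.norm_eq_abs, sq_abs, mul_pow]
    have h6 : (t * ⟪a, xx⟫) * ⟪uu, s⟫ ≤ t * C := by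
      have habs : |(t * ⟪a, xx⟫) * ⟪uu, s⟫| ≤ t * C := by
        rw [abs_mul, abs_mul, abs_of_pos ht0]
        have e1 : t * |⟪a, xx⟫| ≤ t * 1 := mul_le_mul_of_nonneg_left h4 ht0.le
        rw [mul_one] at e1
        exact mul_le_mul e1 h3 (abs_nonneg _) (by positivity)
      exact le_trans (le_abs_self _) habs
    have h7 : ‖uu‖^2 ≤ C^2 := by
      have := pow_le_pow_left₀ (norm_nonneg uu) h1 2
      simpa using this
    rw [h2, h5]
    linarith [h6, h7]
  have hlower : t^2 - 2*C*t ≤ ‖Matrix.toEuclideanLin Zᵀ a‖^2 := by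
    rw [hZt, norm_add_sq_real]
    have hinner_aa : ⟪a, a⟫ = (1:ℝ) := by
      rw [real_inner_self_eq_norm_sq, ha1]; norm_num
    set uu := Matrix.toEuclideanLin Xtᵀ a with huu
    have h1 : ‖uu‖ ≤ C := by
      have := hTb a
      rwa [ha1, mul_one] at this
    have h2 : ⟪uu, (t * ⟪a, a⟫) • s⟫ = (t * ⟪a, a⟫) * ⟪uu, s⟫ :=
      real_inner_smul_right _ _ _
    have h3 : |⟪uu, s⟫| ≤ C := by
      have h := abs_real_inner_le_norm uu s
      rw [hs1, mul_one] at h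
      exact le_trans h h1
    have h5 : ‖(t * ⟪a, a⟫) • s‖^2 = t^2 := by
      rw [norm_smul, hs1, mul_one, Real.norm_eq_abs, sq_abs, hinner_aa, mul_one]
    have h6 : -(t * C) ≤ (t * ⟪a, a⟫) * ⟪uu, s⟫ := by
      rw [hinner_aa, mul_one]
      have habs : |t * ⟪uu, s⟫| ≤ t * C := by
        rw [abs_mul, abs_of_pos ht0]
        exact mul_le_mul_of_nonneg_left h3 ht0.le
      linarith [neg_abs_le (t * ⟪uu, s⟫)]
    rw [h2, h5]
    linarith [h6, sq_nonneg ‖uu‖]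
  obtain ⟨uZ, σZ, hsysZ, hspanZ⟩ := hU Z
  set z := uZ ⟨0, hn⟩ with hzdef
  have hz1 : ‖z‖ = 1 := hsysZ.1.1 _
  have hzmem : z ∈ U Z := by
    rw [hspanZ]
    exact Submodule.subset_span ⟨⟨0, hn⟩, hR1, rfl⟩
  set σ₀ := σZ ⟨0, hn⟩ with hσ₀def
  have heigz : Matrix.toEuclideanLin (Z * Zᵀ) z = σ₀^2 • z := hsysZ.2.2.2 _
  have hNz : ⟪z, Matrix.toEuclideanLin (Z * Zᵀ) z⟫ = σ₀^2 := by
    rw [heigz, real_inner_smul_right, real_inner_self_eq_norm_sq, hz1]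
    norm_num
  have hNz' : σ₀^2 = ‖Matrix.toEuclideanLin Zᵀ z‖^2 := by
    rw [← inner_mulsq, hNz]
  have hray := rayleigh_le hn hsysZ a
  rw [inner_mulsq, ha1] at hray
  rw [one_pow, mul_one] at hray
  have hσlow : t^2 - 2*C*t ≤ σ₀^2 := by
    exact le_trans hlower hray
  have hσup : σ₀^2 ≤ C^2 + 2*C*t + t^2 * ⟪a, z⟫^2 := by
    rw [hNz']
    exact hupper z hz1
  have hc2 : 1 - ⟪a, z⟫^2 ≤ ε^2 := by
    nlinarith [mul_pos ht0 ht0]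
  have hPzbound : ‖(Submodule.orthogonalProjection (U X) z : E n)‖ ≤ ε := by
    have hPz : (Submodule.orthogonalProjection (U X) z : E n)
        = (Submodule.orthogonalProjection (U X) (z - ⟪a, z⟫ • a) : E n) := by
      rw [map_sub, _root_.map_smul, hPa, smul_zero, sub_zero]
    have hnorm1 : ‖(Submodule.orthogonalProjection (U X) (z - ⟪a, z⟫ • a) : E n)‖
        ≤ ‖z - ⟪a, z⟫ • a‖ := by
      have hno := oproj_norm_le (U X)
      have h2 := (Submodule.orthogonalProjection (U X)).le_opNorm (z - ⟪a, z⟫ • a)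
      calc ‖(Submodule.orthogonalProjection (U X) (z - ⟪a, z⟫ • a) : E n)‖
          = ‖Submodule.orthogonalProjection (U X) (z - ⟪a, z⟫ • a)‖ :=
            (Submodule.coe_norm _).symm
        _ ≤ ‖Submodule.orthogonalProjection (U X)‖ * ‖z - ⟪a, z⟫ • a‖ := h2
        _ ≤ 1 * ‖z - ⟪a, z⟫ • a‖ := mul_le_mul_of_nonneg_right hno (norm_nonneg _)
        _ = ‖z - ⟪a, z⟫ • a‖ := one_mul _
    have hzc : ‖z - ⟪a, z⟫ • a‖^2 = 1 - ⟪a, z⟫^2 := by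
      rw [norm_sub_sq_real, real_inner_smul_right, hz1, norm_smul, Real.norm_eq_abs,
        ha1, mul_one, sq_abs]
      have : ⟪z, a⟫ = ⟪a, z⟫ := real_inner_comm a z
      rw [this]
      ring
    have hsq : ‖(Submodule.orthogonalProjection (U X) z : E n)‖^2 ≤ ε^2 := by
      rw [hPz]
      calc ‖(Submodule.orthogonalProjection (U X) (z - ⟪a, z⟫ • a) : E n)‖^2
          ≤ ‖z - ⟪a, z⟫ • a‖^2 :=
            pow_le_pow_left₀ (norm_nonneg _) hnorm1 2
        _ = 1 - ⟪a, z⟫^2 := hzc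
        _ ≤ ε^2 := hc2
    have := Real.sqrt_le_sqrt hsq
    rwa [Real.sqrt_sq (norm_nonneg _), Real.sqrt_sq hε.le] at this
  refine ⟨Z, hcorr, ?_⟩
  have hfrZ : finrank ℝ ↥(U Z) ≤ finrank ℝ ↥(U X) := by
    rw [lss_finrank hRn.le (hU Z), hfrUX]
  exact sInf_proj_le hfrZ hzmem hz1 hε.le hPzbound

lemma sSup_eq_of_subset {S T : Set ℝ} (hS : sSup S = Real.pi/2) (hsub : S ⊆ T)
    (hT : ∀ d ∈ T, d ≤ Real.pi/2) : sSup T = Real.pi/2 := by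
  have hSne : S.Nonempty := by
    by_contra h
    rw [Set.not_nonempty_iff_eq_empty] at h
    rw [h, Real.sSup_empty] at hS
    linarith [Real.pi_pos]
  have hTb : BddAbove T := ⟨Real.pi/2, fun d hd => hT d hd⟩
  have h1 : sSup T ≤ Real.pi/2 := csSup_le (hSne.mono hsub) hT
  have h2 : Real.pi/2 ≤ sSup T := hS ▸ csSup_le_csSup hTb hSne hsub
  linarith

lemma breaks_main {n p R : ℕ} (hR1 : 1 ≤ R) (hRp : R ≤ p) (hRn : R < n)
    (U : Matrix (Fin n) (Fin p) ℝ → Submodule ℝ (E n))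
    (hU : ∀ Y, IsLeftSingularSubspace Y R (U Y))
    (X : Matrix (Fin n) (Fin p) ℝ) : BreaksDownBlock U X (R+1) 1 := by
  have hn : 0 < n := lt_of_le_of_lt (Nat.zero_le R) hRn
  have hp : 0 < p := lt_of_lt_of_le hR1 hRp
  rw [BreaksDownBlock]
  apply csSup_eq_of_forall_le_of_forall_lt_exists_gt
  · obtain ⟨I, hIsub, hI⟩ := Finset.exists_superset_card_eq (s := (∅ : Finset (Fin n))) (n := R+1)
      (by simp) (by simpa [Fintype.card_fin] using (hRn : R+1 ≤ n))
    exact ⟨canonAngle (U X) (U X),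
      X, ⟨I, {⟨0, hp⟩}, hI, Finset.card_singleton _, fun i j _ => rfl⟩, rfl⟩
  · rintro d ⟨Z, hZ, rfl⟩
    exact canonAngle_le_pi_div_two _ _
  · intro w hw
    set y' := max w 0 with hy'
    have hy'0 : 0 ≤ y' := le_max_right _ _
    have hy'lt : y' < Real.pi/2 := max_lt hw (by linarith [Real.pi_pos])
    set y'' := (y' + Real.pi/2)/2 with hy''
    have h1 : y' < y'' := by
      rw [hy'']
      linarith
    have h2 : y'' < Real.pi/2 := by
      rw [hy'']
      linarith
    have h0 : 0 ≤ y'' := by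
      rw [hy'']
      linarith [Real.pi_pos]
    set ε := Real.cos y'' with hεdef
    have hεpos : 0 < ε := Real.cos_pos_of_mem_Ioo ⟨by linarith [Real.pi_pos], h2⟩
    obtain ⟨Z, hZc, hZs⟩ := exists_corrupt hR1 hRp hRn U hU X hεpos
    refine ⟨canonAngle (U Z) (U X), ⟨Z, hZc, rfl⟩, ?_⟩
    have hmon : y'' ≤ canonAngle (U Z) (U X) := by
      rw [canonAngle]
      calc y'' = Real.arccos ε := by
            rw [hεdef, Real.arccos_cos h0 (by linarith [Real.pi_pos])]
        _ ≤ Real.arccos (sInf {r : ℝ | ∃ w_1 ∈ U X, ‖w_1‖ = 1 ∧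
              r = ‖(Submodule.orthogonalProjection (U Z) w_1 : E n)‖}) := by
            rw [Real.arccos_eq_pi_div_two_sub_arcsin, Real.arccos_eq_pi_div_two_sub_arcsin]
            have := Real.monotone_arcsin hZs
            linarith
    calc w ≤ y' := le_max_left _ _
      _ < y'' := h1
      _ ≤ canonAngle (U Z) (U X) := hmon

lemma not_breaks_zero {n p R : ℕ} (hR1 : 1 ≤ R) (hRn : R ≤ n)
    (U : Matrix (Fin n) (Fin p) ℝ → Submodule ℝ (E n))
    (hU : ∀ Y, IsLeftSingularSubspace Y R (U Y))
    (X : Matrix (Fin n) (Fin p) ℝ) (l : ℕ) : ¬ BreaksDownBlock U X 0 l := by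
  intro h
  rw [BreaksDownBlock] at h
  have hzero : ∀ d ∈ {d : ℝ | ∃ Z, BlockCorrupt X Z 0 l ∧ d = canonAngle (U Z) (U X)},
      d = 0 := by
    rintro d ⟨Z, ⟨I, J, hI, hJ, hagree⟩, rfl⟩
    have hZX : Z = X := by
      funext i j
      apply hagree
      left
      rw [Finset.card_eq_zero] at hI
      simp [hI]
    rw [hZX]
    exact canonAngle_self (lss_exists_unit hR1 hRn (hU X))
  rcases Set.eq_empty_or_nonempty
    {d : ℝ | ∃ Z, BlockCorrupt X Z 0 l ∧ d = canonAngle (U Z) (U X)} with he | hne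
  · rw [he, Real.sSup_empty] at h
    linarith [Real.pi_pos]
  · have hle : sSup {d : ℝ | ∃ Z, BlockCorrupt X Z 0 l ∧ d = canonAngle (U Z) (U X)} ≤ 0 :=
      csSup_le hne (fun d hd => le_of_eq (hzero d hd))
    rw [h] at hle
    linarith [Real.pi_pos]

lemma breaks_mono {n p : ℕ}
    (U : Matrix (Fin n) (Fin p) ℝ → Submodule ℝ (E n))
    (X : Matrix (Fin n) (Fin p) ℝ) {k l k' l' : ℕ}
    (h : BreaksDownBlock U X k l) (hk : k ≤ k') (hk' : k' ≤ n) (hl : l ≤ l')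
    (hl' : l' ≤ p) : BreaksDownBlock U X k' l' := by
  rw [BreaksDownBlock] at h ⊢
  apply sSup_eq_of_subset h
  · rintro d ⟨Z, ⟨I, J, hI, hJ, hagree⟩, rfl⟩
    obtain ⟨I', hII', hI'⟩ := Finset.exists_superset_card_eq (hI ▸ hk)
      (by simpa [Fintype.card_fin] using hk')
    obtain ⟨J', hJJ', hJ'⟩ := Finset.exists_superset_card_eq (hJ ▸ hl)
      (by simpa [Fintype.card_fin] using hl')
    refine ⟨Z, ⟨I', J', hI', hJ', ?_⟩, rfl⟩
    intro i j hij
    apply hagree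
    rcases hij with hh | hh
    · exact Or.inl (fun hc => hh (hII' hc))
    · exact Or.inr (fun hc => hh (hJJ' hc))
  · rintro d ⟨Z, _, rfl⟩
    exact canonAngle_le_pi_div_two _ _
/-- for the left singular subspace function `U_R` of the standard SVD
(any fixed selection), there is `k ≤ R+1` with `(k,1) ∈ BP(U_R;X)`; in particular
`bp_row(U_R;X) ≤ R+1` and `bp_col(U_R;X) = 1`. -/
theorem stmt4 {n p : ℕ} (R : ℕ) (hR1 : 1 ≤ R) (hRmin : R ≤ min n p) (hRn : R < n)
    (U : Matrix (Fin n) (Fin p) ℝ → Submodule ℝ (E n))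
    (hU : ∀ Y, IsLeftSingularSubspace Y R (U Y))
    (X : Matrix (Fin n) (Fin p) ℝ) :
    (∃ k ≤ R + 1, IsBP U X k 1) ∧
    bpRow U X ≤ R + 1 ∧ bpCol U X = 1 := by
  have hRp : R ≤ p := le_trans hRmin (min_le_right n p)
  have hRnle : R ≤ n := hRn.le
  have hn : 0 < n := lt_of_le_of_lt (Nat.zero_le R) hRn
  have hp : 0 < p := lt_of_lt_of_le hR1 hRp
  have hmain : BreaksDownBlock U X (R+1) 1 := breaks_main hR1 hRp hRn U hU X
  have hmain' := hmain
  rw [BreaksDownBlock] at hmain'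
  set K := {k : ℕ | BreaksDownBlock U X k 1} with hK
  have hKne : K.Nonempty := ⟨R+1, hmain⟩
  set k := sInf K with hk
  have hkmem : k ∈ K := Nat.sInf_mem hKne
  have hkle : k ≤ R + 1 := Nat.sInf_le hmain
  have hk1 : 1 ≤ k := by
    rcases Nat.eq_zero_or_pos k with h0 | h1
    · exfalso
      have hb0 : BreaksDownBlock U X 0 1 := h0 ▸ hkmem
      exact not_breaks_zero hR1 hRnle U hU X 1 hb0
    · exact h1
  have hkn : k ≤ n := le_trans hkle hRn
  have hbrow : BreaksDownRow U X (R+1) := by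
    rw [BreaksDownRow]
    apply sSup_eq_of_subset hmain'
    · rintro d ⟨Z, ⟨I, J, hI, hJ, hagree⟩, rfl⟩
      exact ⟨Z, ⟨I, hI, fun i hi j => hagree i j (Or.inl hi)⟩, rfl⟩
    · rintro d ⟨Z, _, rfl⟩
      exact canonAngle_le_pi_div_two _ _
  have hbcol : BreaksDownCol U X 1 := by
    rw [BreaksDownCol]
    apply sSup_eq_of_subset hmain'
    · rintro d ⟨Z, ⟨I, J, hI, hJ, hagree⟩, rfl⟩
      exact ⟨Z, ⟨J, hJ, fun j hj i => hagree i j (Or.inr hj)⟩, rfl⟩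
    · rintro d ⟨Z, _, rfl⟩
      exact canonAngle_le_pi_div_two _ _
  refine ⟨⟨k, hkle, hk1, hkn, le_refl 1, hp, ?_, ?_⟩, ?_, ?_⟩
  · intro k'' l hkk hk''n h1l hlp
    exact breaks_mono U X hkmem hkk hk''n h1l hlp
  · intro k' l' h1k' h1l' hk'k hl'1 hne
    have hl'eq : l' = 1 := le_antisymm hl'1 h1l'
    subst hl'eq
    have hk'lt : k' < k := by
      rcases lt_or_eq_of_le hk'k with hlt | heq
      · exact hlt
      · exact absurd (by rw [heq]) hne
    intro hb
    exact absurd (Nat.sInf_le (show k' ∈ K from hb)) (not_le.2 hk'lt)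
  · apply Nat.sInf_le
    exact ⟨by omega, hRn, hbrow⟩
  · have h1mem : (1:ℕ) ∈ {l : ℕ | 1 ≤ l ∧ l ≤ p ∧ BreaksDownCol U X l} :=
      ⟨le_refl 1, hp, hbcol⟩
    have hle := Nat.sInf_le h1mem
    have hge : 1 ≤ sInf {l : ℕ | 1 ≤ l ∧ l ≤ p ∧ BreaksDownCol U X l} :=
      (Nat.sInf_mem ⟨1, h1mem⟩).1
    rw [bpCol]
    omega
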